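/- Let A ⊆ F_q be a set of size n partitioned into disjoint sets A_1, ..., A_{n/(r+1)} each of size r+1, and suppose there exists a good polynomial g ∈ F_q[x] of degree r+1 that is constant on each A_i. Let R be the set of polynomials of degree less than n that are constant on each A_i. Then R is an F_q-vector space of dimension n/(r+1), and the polynomials 1, g, g^2, ..., g^{n/(r+1)−1} form a basis of R. -/

import Mathlib

open Polynomial

/-- Let `A ⊆ F_q` of size `n` be partitioned into `n/(r+1)` disjoint sets each
of size `r+1`, and let `g` be a good polynomial of degree `r+1` (constant on each part). Let `R`
be the set of polynomials of degree `< n` that are constant on each part. Then `R` is an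
`F_q`-subspace of dimension `n/(r+1)`, and `1, g, g², …, g^{n/(r+1)−1}` form a basis of `R`. -/
theorem stmt_6 (F : Type) [Field F] [Fintype F] [DecidableEq F] (n r : ℕ)
    (hdvd : (r + 1) ∣ n) (A : Finset F) (hA : A.card = n)
    (P : Fin (n / (r + 1)) → Finset F)
    (hunion : A = Finset.univ.biUnion P)
    (hdisj : ∀ i j, i ≠ j → Disjoint (P i) (P j))
    (hcard : ∀ i, (P i).card = r + 1)
    (g : Polynomial F) (hgdeg : g.natDegree = r + 1)
    (hgconst : ∀ i, ∀ α ∈ P i, ∀ β ∈ P i, g.eval α = g.eval β) :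
    ∃ V : Submodule F (Polynomial F),
      (V : Set (Polynomial F)) =
        {f : Polynomial F | f.degree < (n : WithBot ℕ) ∧
          ∀ i, ∀ α ∈ P i, ∀ β ∈ P i, f.eval α = f.eval β} ∧
      Module.finrank F V = n / (r + 1) ∧
      LinearIndependent F (fun i : Fin (n / (r + 1)) => g ^ (i : ℕ)) ∧
      Submodule.span F (Set.range (fun i : Fin (n / (r + 1)) => g ^ (i : ℕ))) = V := by
  classical
  have hn : (n / (r + 1)) * (r + 1) = n := Nat.div_mul_cancel hdvd
  have hg0 : g ≠ 0 := fun h => by simp [h] at hgdeg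
  have hgnd : g.natDegree ≠ 0 := by rw [hgdeg]; omega
  have hgdeg' : g.degree = (r + 1 : ℕ) := by rw [degree_eq_natDegree hg0, hgdeg]
  -- the submodule
  let V : Submodule F (Polynomial F) :=
    { carrier := {f : Polynomial F | f.degree < (n : WithBot ℕ) ∧
          ∀ i, ∀ α ∈ P i, ∀ β ∈ P i, f.eval α = f.eval β}
      zero_mem' := ⟨by rw [degree_zero]; exact WithBot.bot_lt_coe n, by simp⟩
      add_mem' := fun hf hh => ⟨lt_of_le_of_lt (degree_add_le _ _) (max_lt hf.1 hh.1),
        fun i α hα β hβ => by simp [hf.2 i α hα β hβ, hh.2 i α hα β hβ]⟩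
      smul_mem' := fun a f hf => ⟨lt_of_le_of_lt (degree_smul_le a f) hf.1,
        fun i α hα β hβ => by simp [hf.2 i α hα β hβ]⟩ }
  -- representatives and values of g
  have hPne : ∀ i, (P i).Nonempty := fun i => Finset.card_pos.mp (by rw [hcard i]; omega)
  set rep : Fin (n / (r + 1)) → F := fun i => (hPne i).choose with hrep
  have hrepmem : ∀ i, rep i ∈ P i := fun i => (hPne i).choose_spec
  set c : Fin (n / (r + 1)) → F := fun i => g.eval (rep i) with hc
  have hcval : ∀ i, ∀ α ∈ P i, g.eval α = c i := fun i α hα =>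
    hgconst i α hα (rep i) (hrepmem i)
  -- injectivity of c
  have hcinj : Function.Injective c := by
    intro i j hij
    by_contra hne
    have h0 : g - C (c i) = 0 := by
      apply Polynomial.eq_zero_of_degree_lt_of_eval_finset_eq_zero (P i ∪ P j)
      · have hcardu : (P i ∪ P j).card = 2 * (r + 1) := by
          rw [Finset.card_union_of_disjoint (hdisj i j hne), hcard i, hcard j]; ring
        have hdlt : (g - C (c i)).degree = ((r+1 : ℕ) : WithBot ℕ) := by
          rw [sub_eq_add_neg, ← C_neg]
          rw [degree_add_C (by rw [hgdeg']; exact_mod_cast Nat.succ_pos r), hgdeg']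
        rw [hdlt, hcardu]
        exact_mod_cast (by omega : r + 1 < 2 * (r + 1))
      · intro x hx
        rcases Finset.mem_union.mp hx with h | h
        · simp [hcval i x h]
        · simp [hcval j x h, hij]
    have : g = C (c i) := sub_eq_zero.mp h0
    rw [this, natDegree_C] at hgnd; exact hgnd rfl
  -- each power g^k lies in V
  have hpowmem : ∀ k : Fin (n / (r + 1)), g ^ (k : ℕ) ∈ V := by
    intro k
    constructor
    · have hd : (g ^ (k : ℕ)).natDegree = (k : ℕ) * (r + 1) := by
        rw [natDegree_pow, hgdeg]
      apply lt_of_le_of_lt (degree_le_natDegree)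
      rw [hd]
      exact_mod_cast (by nlinarith [k.isLt] : (k : ℕ) * (r + 1) < n)
    · intro i α hα β hβ
      simp [eval_pow, hgconst i α hα β hβ]
  -- linear independence
  have hli : LinearIndependent F (fun i : Fin (n / (r + 1)) => g ^ (i : ℕ)) := by
    have hX : LinearIndependent F (fun k : ℕ => (X : Polynomial F) ^ k) := by
      have := (Polynomial.basisMonomials F).linearIndependent
      rw [coe_basisMonomials] at this
      simpa [X_pow_eq_monomial] using this
    have hXm : LinearIndependent F (fun k : Fin (n / (r + 1)) => (X : Polynomial F) ^ (k : ℕ)) :=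
      hX.comp (fun k : Fin (n / (r + 1)) => (k : ℕ)) Fin.val_injective
    have hker : LinearMap.ker (Polynomial.aeval (R := F) g).toLinearMap = ⊥ := by
      rw [LinearMap.ker_eq_bot']
      intro p hp
      by_contra hp0
      have hlc : (p.comp g).leadingCoeff = p.leadingCoeff * g.leadingCoeff ^ p.natDegree :=
        leadingCoeff_comp hgnd
      have : p.comp g ≠ 0 := by
        intro h
        rw [h, leadingCoeff_zero] at hlc
        exact mul_ne_zero (leadingCoeff_ne_zero.mpr hp0)
          (pow_ne_zero _ (leadingCoeff_ne_zero.mpr hg0)) hlc.symm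
      exact this (by rw [comp_eq_aeval]; exact hp)
    have := hXm.map' (Polynomial.aeval (R := F) g).toLinearMap hker
    simpa [Function.comp_def, map_pow, aeval_X] using this
  have hspan : Submodule.span F (Set.range (fun i : Fin (n / (r + 1)) => g ^ (i : ℕ))) = V := by
    apply le_antisymm
    · rw [Submodule.span_le]
      rintro _ ⟨k, rfl⟩
      exact hpowmem k
    · intro f hf
      obtain ⟨hfdeg, hfconst⟩ := hf
      set h := Lagrange.interpolate Finset.univ c (fun i => f.eval (rep i)) with hh
      have hcinj' : Set.InjOn c (Finset.univ : Finset (Fin (n / (r + 1)))) := hcinj.injOn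
      have hhdeg : h.degree < ((n / (r + 1) : ℕ) : WithBot ℕ) := by
        have := Lagrange.degree_interpolate_lt (fun i => f.eval (rep i)) hcinj'
        rw [Finset.card_univ, Fintype.card_fin] at this
        exact this
      have hsupp : ∀ e ∈ h.support, e < n / (r + 1) := by
        intro e he
        have hhne : h ≠ 0 := fun h0 => by simp [h0] at he
        have : h.natDegree < n / (r + 1) := (natDegree_lt_iff_degree_lt hhne).mpr hhdeg
        exact lt_of_le_of_lt (le_natDegree_of_mem_supp e he) this
      have hfeq : f = h.comp g := by
        have hz : f - h.comp g = 0 := by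
          apply Polynomial.eq_zero_of_degree_lt_of_eval_finset_eq_zero A
          · rw [hA]
            apply lt_of_le_of_lt (degree_sub_le _ _)
            apply max_lt hfdeg
            rcases eq_or_ne h 0 with h0 | h0
            · rw [h0, zero_comp, degree_zero]; exact WithBot.bot_lt_coe n
            · have hcompne : h.comp g ≠ 0 := by
                intro hcg
                have hlc := leadingCoeff_comp (p := h) hgnd
                rw [hcg, leadingCoeff_zero] at hlc
                exact mul_ne_zero (leadingCoeff_ne_zero.mpr h0)
                  (pow_ne_zero _ (leadingCoeff_ne_zero.mpr hg0)) hlc.symm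
              rw [degree_eq_natDegree hcompne, natDegree_comp, hgdeg]
              have hnd : h.natDegree < n / (r + 1) := (natDegree_lt_iff_degree_lt h0).mpr hhdeg
              exact_mod_cast (by nlinarith : h.natDegree * (r + 1) < n)
          · intro x hx
            rw [hunion] at hx
            obtain ⟨i, _, hxi⟩ := Finset.mem_biUnion.mp hx
            have h1 : f.eval x = f.eval (rep i) := hfconst i x hxi (rep i) (hrepmem i)
            have h2 : (h.comp g).eval x = f.eval (rep i) := by
              rw [eval_comp, hcval i x hxi, hh]
              exact Lagrange.eval_interpolate_at_node _ hcinj' (Finset.mem_univ i)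
            simp [eval_sub, h1, h2]
        exact sub_eq_zero.mp hz
      rw [hfeq, comp_eq_sum_left, Polynomial.sum]
      apply Submodule.sum_mem
      intro e he
      have hCe : C (h.coeff e) * g ^ e = (h.coeff e) • g ^ e := (smul_eq_C_mul _).symm
      rw [hCe]
      apply Submodule.smul_mem
      apply Submodule.subset_span
      exact ⟨⟨e, hsupp e he⟩, rfl⟩
  refine ⟨V, rfl, ?_, hli, hspan⟩
  rw [← hspan, finrank_span_eq_card hli, Fintype.card_fin]
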